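/- Let $D_\mu = \{(z_1,z_2) \in \mathbb{C}^2 : \mathrm{Re}(z_1 e^{-i\log|z_2|^2}) > 0, \; |\log|z_2|^2| < \mu\}$ with defining function $\rho(z_1,z_2) = -\mathrm{Re}(z_1 e^{-i\log|z_2|^2})$. Then the complex Hessian (Levi form) of $\rho$ satisfies: the Fefferman Monge–Ampère determinant $M(\rho) = -\det\begin{pmatrix}\rho & \rho_{\bar k}\\ \rho_j & \rho_{j\bar k}\end{pmatrix}$ vanishes identically at every boundary point of $D_\mu$ where $z_1 \ne 0$ and $\rho = 0$. -/

import Mathlib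

open Complex

/-- Wirtinger derivative `∂/∂z₁` of a function on `ℂ²`. -/
noncomputable def wd1 (f : ℂ × ℂ → ℂ) (p : ℂ × ℂ) : ℂ :=
  (1 / 2) * (fderiv ℝ f p ((1 : ℂ), (0 : ℂ)) - Complex.I * fderiv ℝ f p (Complex.I, (0 : ℂ)))

/-- Wirtinger derivative `∂/∂z̄₁`. -/
noncomputable def wd1bar (f : ℂ × ℂ → ℂ) (p : ℂ × ℂ) : ℂ :=
  (1 / 2) * (fderiv ℝ f p ((1 : ℂ), (0 : ℂ)) + Complex.I * fderiv ℝ f p (Complex.I, (0 : ℂ)))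

/-- Wirtinger derivative `∂/∂z₂`. -/
noncomputable def wd2 (f : ℂ × ℂ → ℂ) (p : ℂ × ℂ) : ℂ :=
  (1 / 2) * (fderiv ℝ f p ((0 : ℂ), (1 : ℂ)) - Complex.I * fderiv ℝ f p ((0 : ℂ), Complex.I))

/-- Wirtinger derivative `∂/∂z̄₂`. -/
noncomputable def wd2bar (f : ℂ × ℂ → ℂ) (p : ℂ × ℂ) : ℂ :=
  (1 / 2) * (fderiv ℝ f p ((0 : ℂ), (1 : ℂ)) + Complex.I * fderiv ℝ f p ((0 : ℂ), Complex.I))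

/-- Fefferman's Monge–Ampère determinant `M(ρ) = -det [[ρ, ρ_k̄],[ρ_j, ρ_{jk̄}]]`. -/
noncomputable def feffermanMA (ρ : ℂ × ℂ → ℂ) (p : ℂ × ℂ) : ℂ :=
  -Matrix.det
    !![ρ p,      wd1bar ρ p,          wd2bar ρ p;
       wd1 ρ p,  wd1 (wd1bar ρ) p,    wd1 (wd2bar ρ) p;
       wd2 ρ p,  wd2 (wd1bar ρ) p,    wd2 (wd2bar ρ) p]

/-- The defining function `ρ(z₁,z₂) = -Re(z₁ e^{-i log|z₂|²})` of the model worm `D_μ`. -/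
noncomputable def modelRho (z : ℂ × ℂ) : ℂ :=
  ((-(z.1 * Complex.exp (-Complex.I * (Real.log (‖z.2‖ ^ 2) : ℂ))).re : ℝ) : ℂ)

set_option maxHeartbeats 1600000
namespace WormAux
open Complex

noncomputable def lc (w : ℂ) : ℂ := ((Real.log (‖w‖ ^ 2) : ℝ) : ℂ)

noncomputable def dn (w : ℂ) : ℂ →L[ℝ] ℝ :=
  w.re • Complex.reCLM + w.re • Complex.reCLM + (w.im • Complex.imCLM + w.im • Complex.imCLM)

lemma hasFDerivAt_absSq (w : ℂ) :
    HasFDerivAt (fun w : ℂ => (‖w‖ ^ 2 : ℝ)) (dn w) w := by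
  have hre : HasFDerivAt (fun w : ℂ => w.re) Complex.reCLM w := Complex.reCLM.hasFDerivAt
  have him : HasFDerivAt (fun w : ℂ => w.im) Complex.imCLM w := Complex.imCLM.hasFDerivAt
  simpa only [Complex.sq_norm, Complex.normSq_apply, dn, Pi.mul_def, Pi.add_def] using (hre.mul hre).add (him.mul him)

lemma absSq_ne (w : ℂ) (hw : w ≠ 0) : (‖w‖ ^ 2 : ℝ) ≠ 0 :=
  pow_ne_zero 2 (norm_ne_zero_iff.mpr hw)

noncomputable def dl (w : ℂ) : ℂ →L[ℝ] ℂ :=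
  Complex.ofRealCLM.comp ((‖w‖ ^ 2)⁻¹ • dn w)

lemma hasFDerivAt_lc (w : ℂ) (hw : w ≠ 0) : HasFDerivAt lc (dl w) w :=
  Complex.ofRealCLM.hasFDerivAt.comp w ((hasFDerivAt_absSq w).log (absSq_ne w hw))

noncomputable def de (w : ℂ) : ℂ →L[ℝ] ℂ :=
  Complex.exp (-Complex.I * lc w) • (-Complex.I) • dl w

lemma hasFDerivAt_E (w : ℂ) (hw : w ≠ 0) :
    HasFDerivAt (fun w : ℂ => Complex.exp (-Complex.I * lc w)) (de w) w :=
  ((hasFDerivAt_lc w hw).const_mul (-Complex.I)).cexp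

noncomputable def dei (w : ℂ) : ℂ →L[ℝ] ℂ :=
  Complex.exp (Complex.I * lc w) • Complex.I • dl w

lemma hasFDerivAt_EI (w : ℂ) (hw : w ≠ 0) :
    HasFDerivAt (fun w : ℂ => Complex.exp (Complex.I * lc w)) (dei w) w :=
  ((hasFDerivAt_lc w hw).const_mul Complex.I).cexp

noncomputable def dg (p : ℂ × ℂ) : (ℂ × ℂ) →L[ℝ] ℂ :=
  p.1 • (de p.2).comp (ContinuousLinearMap.snd ℝ ℂ ℂ) +
    Complex.exp (-Complex.I * lc p.2) • ContinuousLinearMap.fst ℝ ℂ ℂ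

lemma hasFDerivAt_g (p : ℂ × ℂ) (h2 : p.2 ≠ 0) :
    HasFDerivAt (fun z : ℂ × ℂ => z.1 * Complex.exp (-Complex.I * lc z.2)) (dg p) p :=
  (hasFDerivAt_fst (p := p)).mul ((hasFDerivAt_E p.2 h2).comp p (hasFDerivAt_snd (p := p)))

noncomputable def dρ (p : ℂ × ℂ) : (ℂ × ℂ) →L[ℝ] ℂ :=
  Complex.ofRealCLM.comp (-(Complex.reCLM.comp (dg p)))

lemma hasFDerivAt_modelRho (p : ℂ × ℂ) (h2 : p.2 ≠ 0) :
    HasFDerivAt modelRho (dρ p) p :=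
  Complex.ofRealCLM.hasFDerivAt.comp p
    ((Complex.reCLM.hasFDerivAt.comp p (hasFDerivAt_g p h2)).neg)

/-- `∂ρ/∂z̄₁`-target. -/
noncomputable def f1b (p : ℂ × ℂ) : ℂ := -Complex.exp (Complex.I * lc p.2) / 2

/-- `∂ρ/∂z̄₂`-target. -/
noncomputable def f2b (p : ℂ × ℂ) : ℂ :=
  (((-((p.1 * Complex.exp (-Complex.I * lc p.2)).im * (‖p.2‖ ^ 2)⁻¹) : ℝ)) : ℂ) * p.2

lemma wd1_modelRho (p : ℂ × ℂ) (h2 : p.2 ≠ 0) :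
    wd1 modelRho p = -Complex.exp (-Complex.I * lc p.2) / 2 := by
  rw [wd1, (hasFDerivAt_modelRho p h2).fderiv]
  simp only [dρ, dg, de, dl, dn, ContinuousLinearMap.coe_comp', Function.comp_apply,
    ContinuousLinearMap.neg_apply, ContinuousLinearMap.add_apply, ContinuousLinearMap.coe_smul',
    Pi.smul_apply, ContinuousLinearMap.smul_apply, ContinuousLinearMap.coe_fst',
    ContinuousLinearMap.coe_snd', Complex.ofRealCLM_apply, Complex.reCLM_apply,
    Complex.imCLM_apply, smul_eq_mul, Complex.zero_re, Complex.zero_im, Complex.one_re,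
    Complex.one_im, Complex.I_re, Complex.I_im, mul_zero, add_zero, zero_add, mul_one,
    Complex.ofReal_zero]
  generalize Complex.exp (-Complex.I * lc p.2) = w
  simp only [Complex.ext_iff, Complex.mul_I_re, Complex.mul_I_im, Complex.add_re, Complex.add_im,
    Complex.sub_re, Complex.sub_im, Complex.mul_re, Complex.mul_im, Complex.ofReal_re,
    Complex.ofReal_im, Complex.I_re, Complex.I_im, Complex.neg_re, Complex.neg_im,
    Complex.conj_re, Complex.conj_im, Complex.div_re, Complex.div_im, Complex.one_re,
    Complex.one_im, Complex.re_ofNat, Complex.im_ofNat, Complex.normSq_ofNat]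
  constructor <;> ring

lemma wd1bar_modelRho (p : ℂ × ℂ) (h2 : p.2 ≠ 0) :
    wd1bar modelRho p = f1b p := by
  rw [wd1bar, (hasFDerivAt_modelRho p h2).fderiv, f1b]
  simp only [dρ, dg, de, dl, dn, ContinuousLinearMap.coe_comp', Function.comp_apply,
    ContinuousLinearMap.neg_apply, ContinuousLinearMap.add_apply, ContinuousLinearMap.coe_smul',
    Pi.smul_apply, ContinuousLinearMap.smul_apply, ContinuousLinearMap.coe_fst',
    ContinuousLinearMap.coe_snd', Complex.ofRealCLM_apply, Complex.reCLM_apply,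
    Complex.imCLM_apply, smul_eq_mul, Complex.zero_re, Complex.zero_im, Complex.one_re,
    Complex.one_im, Complex.I_re, Complex.I_im, mul_zero, add_zero, zero_add, mul_one,
    Complex.ofReal_zero]
  have hconj : Complex.exp (Complex.I * lc p.2)
      = (starRingEnd ℂ) (Complex.exp (-Complex.I * lc p.2)) := by
    rw [← Complex.exp_conj]
    simp only [lc, map_mul, map_neg, Complex.conj_I, Complex.conj_ofReal, neg_mul, neg_neg]
  rw [hconj]
  generalize Complex.exp (-Complex.I * lc p.2) = w
  simp only [Complex.ext_iff, Complex.mul_I_re, Complex.mul_I_im, Complex.add_re, Complex.add_im,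
    Complex.mul_re, Complex.mul_im, Complex.ofReal_re, Complex.ofReal_im, Complex.I_re,
    Complex.I_im, Complex.neg_re, Complex.neg_im, Complex.conj_re, Complex.conj_im,
    Complex.div_re, Complex.div_im, Complex.one_re, Complex.one_im, Complex.re_ofNat,
    Complex.im_ofNat, Complex.normSq_ofNat]
  constructor <;> ring

lemma wd2_modelRho (p : ℂ × ℂ) (h2 : p.2 ≠ 0) :
    wd2 modelRho p =
      -((((p.1 * Complex.exp (-Complex.I * lc p.2)).im * (‖p.2‖ ^ 2)⁻¹ : ℝ)) : ℂ) *
        (starRingEnd ℂ) p.2 := by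
  rw [wd2, (hasFDerivAt_modelRho p h2).fderiv]
  simp only [dρ, dg, de, dl, dn, ContinuousLinearMap.coe_comp', Function.comp_apply,
    ContinuousLinearMap.neg_apply, ContinuousLinearMap.add_apply, ContinuousLinearMap.coe_smul',
    Pi.smul_apply, ContinuousLinearMap.smul_apply, ContinuousLinearMap.coe_fst',
    ContinuousLinearMap.coe_snd', Complex.ofRealCLM_apply, Complex.reCLM_apply,
    Complex.imCLM_apply, smul_eq_mul, Complex.zero_re, Complex.zero_im, Complex.one_re,
    Complex.one_im, Complex.I_re, Complex.I_im, mul_zero, add_zero, zero_add, mul_one,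
    Complex.ofReal_zero]
  generalize Complex.exp (-Complex.I * lc p.2) = w
  simp only [Complex.ext_iff, Complex.mul_I_re, Complex.mul_I_im, Complex.add_re, Complex.add_im,
    Complex.sub_re, Complex.sub_im, Complex.mul_re, Complex.mul_im, Complex.ofReal_re,
    Complex.ofReal_im, Complex.I_re, Complex.I_im, Complex.neg_re, Complex.neg_im,
    Complex.conj_re, Complex.conj_im, Complex.div_re, Complex.div_im, Complex.one_re,
    Complex.one_im, Complex.re_ofNat, Complex.im_ofNat, Complex.normSq_ofNat]
  constructor <;> ring

lemma wd2bar_modelRho (p : ℂ × ℂ) (h2 : p.2 ≠ 0) :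
    wd2bar modelRho p = f2b p := by
  rw [wd2bar, (hasFDerivAt_modelRho p h2).fderiv, f2b]
  simp only [dρ, dg, de, dl, dn, ContinuousLinearMap.coe_comp', Function.comp_apply,
    ContinuousLinearMap.neg_apply, ContinuousLinearMap.add_apply, ContinuousLinearMap.coe_smul',
    Pi.smul_apply, ContinuousLinearMap.smul_apply, ContinuousLinearMap.coe_fst',
    ContinuousLinearMap.coe_snd', Complex.ofRealCLM_apply, Complex.reCLM_apply,
    Complex.imCLM_apply, smul_eq_mul, Complex.zero_re, Complex.zero_im, Complex.one_re,
    Complex.one_im, Complex.I_re, Complex.I_im, mul_zero, add_zero, zero_add, mul_one,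
    Complex.ofReal_zero]
  generalize Complex.exp (-Complex.I * lc p.2) = w
  simp only [Complex.ext_iff, Complex.mul_I_re, Complex.mul_I_im, Complex.add_re, Complex.add_im,
    Complex.sub_re, Complex.sub_im, Complex.mul_re, Complex.mul_im, Complex.ofReal_re,
    Complex.ofReal_im, Complex.I_re, Complex.I_im, Complex.neg_re, Complex.neg_im,
    Complex.conj_re, Complex.conj_im, Complex.div_re, Complex.div_im, Complex.one_re,
    Complex.one_im, Complex.re_ofNat, Complex.im_ofNat, Complex.normSq_ofNat]
  constructor <;> ring

lemma hasFDerivAt_f1b (p : ℂ × ℂ) (h2 : p.2 ≠ 0) :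
    HasFDerivAt f1b ((-(1 : ℂ)/2) • (dei p.2).comp (ContinuousLinearMap.snd ℝ ℂ ℂ)) p := by
  have h := (((hasFDerivAt_EI p.2 h2).comp p (hasFDerivAt_snd (p := p))).const_mul (-(1:ℂ)/2))
  exact h.congr_of_eventuallyEq (Filter.Eventually.of_forall fun z => by
    simp only [f1b, Function.comp]; ring)

section SecondDerivs

variable (p : ℂ × ℂ)

lemma wd1_f1b (h2 : p.2 ≠ 0) : wd1 f1b p = 0 := by
  rw [wd1, (hasFDerivAt_f1b p h2).fderiv]
  simp [dei, dl, dn]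

lemma wd2_f1b (h2 : p.2 ≠ 0) :
    wd2 f1b p = -(Complex.I/2) * Complex.exp (Complex.I * lc p.2) *
      (((‖p.2‖ ^ 2)⁻¹ : ℝ) : ℂ) * (starRingEnd ℂ) p.2 := by
  rw [wd2, (hasFDerivAt_f1b p h2).fderiv]
  simp only [dei, dl, dn, ContinuousLinearMap.coe_comp', Function.comp_apply,
    ContinuousLinearMap.neg_apply, ContinuousLinearMap.add_apply, ContinuousLinearMap.coe_smul',
    Pi.smul_apply, ContinuousLinearMap.smul_apply, ContinuousLinearMap.coe_fst',
    ContinuousLinearMap.coe_snd', Complex.ofRealCLM_apply, Complex.reCLM_apply,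
    Complex.imCLM_apply, smul_eq_mul, Complex.zero_re, Complex.zero_im, Complex.one_re,
    Complex.one_im, Complex.I_re, Complex.I_im, mul_zero, add_zero, zero_add, mul_one,
    Complex.ofReal_zero]
  generalize Complex.exp (Complex.I * lc p.2) = w
  simp only [Complex.ext_iff, Complex.mul_I_re, Complex.mul_I_im, Complex.add_re, Complex.add_im,
    Complex.sub_re, Complex.sub_im, Complex.mul_re, Complex.mul_im, Complex.ofReal_re,
    Complex.ofReal_im, Complex.I_re, Complex.I_im, Complex.neg_re, Complex.neg_im,
    Complex.conj_re, Complex.conj_im, Complex.div_re, Complex.div_im, Complex.one_re,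
    Complex.one_im, Complex.re_ofNat, Complex.im_ofNat, Complex.normSq_ofNat]
  constructor <;> ring

lemma wd1_f2b (h2 : p.2 ≠ 0) :
    wd1 f2b p = Complex.I/2 * (((‖p.2‖ ^ 2)⁻¹ : ℝ) : ℂ) * p.2 *
      Complex.exp (-Complex.I * lc p.2) := by
  have hF : HasFDerivAt f2b _ p := ((Complex.ofRealCLM.hasFDerivAt.comp p
    (((Complex.imCLM.hasFDerivAt.comp p (hasFDerivAt_g p h2)).mul
      ((hasDerivAt_inv (absSq_ne p.2 h2)).comp_hasFDerivAt p
        ((hasFDerivAt_absSq p.2).comp p (hasFDerivAt_snd (p := p))))).neg)).mul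
    (hasFDerivAt_snd (p := p)))
  rw [wd1, hF.fderiv]
  simp only [dg, de, dl, dn, ContinuousLinearMap.coe_comp', Function.comp_apply,
    ContinuousLinearMap.neg_apply, ContinuousLinearMap.add_apply, ContinuousLinearMap.coe_smul',
    Pi.smul_apply, ContinuousLinearMap.smul_apply, ContinuousLinearMap.coe_fst',
    ContinuousLinearMap.coe_snd', Complex.ofRealCLM_apply, Complex.reCLM_apply,
    Complex.imCLM_apply, smul_eq_mul, Complex.zero_re, Complex.zero_im, Complex.one_re,
    Complex.one_im, Complex.I_re, Complex.I_im, mul_zero, add_zero, zero_add, mul_one,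
    zero_mul, Complex.ofReal_zero, Pi.neg_apply, neg_zero, sub_zero, zero_sub, neg_neg,
    Complex.ofReal_neg]
  generalize Complex.exp (-Complex.I * lc p.2) = w
  simp only [Complex.ext_iff, Complex.mul_I_re, Complex.mul_I_im, Complex.add_re, Complex.add_im,
    Complex.sub_re, Complex.sub_im, Complex.mul_re, Complex.mul_im, Complex.ofReal_re,
    Complex.ofReal_im, Complex.I_re, Complex.I_im, Complex.neg_re, Complex.neg_im,
    Complex.conj_re, Complex.conj_im, Complex.div_re, Complex.div_im, Complex.one_re,
    Complex.one_im, Complex.re_ofNat, Complex.im_ofNat, Complex.normSq_ofNat]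
  constructor <;> ring

lemma wd2_f2b (h2 : p.2 ≠ 0) :
    wd2 f2b p = (((p.1 * Complex.exp (-Complex.I * lc p.2)).re * (‖p.2‖ ^ 2)⁻¹ : ℝ) : ℂ) := by
  have hF : HasFDerivAt f2b _ p := ((Complex.ofRealCLM.hasFDerivAt.comp p
    (((Complex.imCLM.hasFDerivAt.comp p (hasFDerivAt_g p h2)).mul
      ((hasDerivAt_inv (absSq_ne p.2 h2)).comp_hasFDerivAt p
        ((hasFDerivAt_absSq p.2).comp p (hasFDerivAt_snd (p := p))))).neg)).mul
    (hasFDerivAt_snd (p := p)))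
  rw [wd2, hF.fderiv]
  simp only [dg, de, dl, dn, ContinuousLinearMap.coe_comp', Function.comp_apply,
    ContinuousLinearMap.neg_apply, ContinuousLinearMap.add_apply, ContinuousLinearMap.coe_smul',
    Pi.smul_apply, ContinuousLinearMap.smul_apply, ContinuousLinearMap.coe_fst',
    ContinuousLinearMap.coe_snd', Complex.ofRealCLM_apply, Complex.reCLM_apply,
    Complex.imCLM_apply, smul_eq_mul, Complex.zero_re, Complex.zero_im, Complex.one_re,
    Complex.one_im, Complex.I_re, Complex.I_im, mul_zero, add_zero, zero_add, mul_one,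
    zero_mul, Complex.ofReal_zero, Pi.neg_apply, neg_zero, sub_zero, zero_sub, neg_neg,
    Complex.ofReal_neg, Pi.mul_apply]
  have hs := absSq_ne p.2 h2
  generalize Complex.exp (-Complex.I * lc p.2) = w
  have habs2 : (‖p.2‖ ^ 2 : ℝ) = p.2.re * p.2.re + p.2.im * p.2.im := by
    rw [Complex.sq_norm, Complex.normSq_apply]
  rw [habs2] at hs ⊢
  simp only [Complex.ext_iff, Complex.mul_I_re, Complex.mul_I_im, Complex.add_re, Complex.add_im,
    Complex.sub_re, Complex.sub_im, Complex.mul_re, Complex.mul_im, Complex.ofReal_re,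
    Complex.ofReal_im, Complex.I_re, Complex.I_im, Complex.neg_re, Complex.neg_im,
    Complex.conj_re, Complex.conj_im, Complex.div_re, Complex.div_im, Complex.one_re,
    Complex.one_im, Complex.re_ofNat, Complex.im_ofNat, Complex.normSq_ofNat]
  have hs' : p.2.re ^ 2 + p.2.im ^ 2 ≠ 0 := by simpa only [sq] using hs
  constructor <;> field_simp <;> ring

end SecondDerivs

lemma nhds_snd_ne (p : ℂ × ℂ) (h2 : p.2 ≠ 0) : {q : ℂ × ℂ | q.2 ≠ 0} ∈ nhds p := by
  have : IsOpen {q : ℂ × ℂ | q.2 ≠ 0} :=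
    isOpen_compl_singleton.preimage continuous_snd
  exact this.mem_nhds h2

lemma ev1 (p : ℂ × ℂ) (h2 : p.2 ≠ 0) : wd1bar modelRho =ᶠ[nhds p] f1b :=
  Filter.eventually_of_mem (nhds_snd_ne p h2) fun q hq => wd1bar_modelRho q hq

lemma ev2 (p : ℂ × ℂ) (h2 : p.2 ≠ 0) : wd2bar modelRho =ᶠ[nhds p] f2b :=
  Filter.eventually_of_mem (nhds_snd_ne p h2) fun q hq => wd2bar_modelRho q hq

lemma wd1_wd1bar (p : ℂ × ℂ) (h2 : p.2 ≠ 0) : wd1 (wd1bar modelRho) p = 0 := by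
  rw [wd1, (ev1 p h2).fderiv_eq, ← wd1]; exact wd1_f1b p h2

lemma wd2_wd1bar (p : ℂ × ℂ) (h2 : p.2 ≠ 0) :
    wd2 (wd1bar modelRho) p = -(Complex.I/2) * Complex.exp (Complex.I * lc p.2) *
      (((‖p.2‖ ^ 2)⁻¹ : ℝ) : ℂ) * (starRingEnd ℂ) p.2 := by
  rw [wd2, (ev1 p h2).fderiv_eq, ← wd2]; exact wd2_f1b p h2

lemma wd1_wd2bar (p : ℂ × ℂ) (h2 : p.2 ≠ 0) :
    wd1 (wd2bar modelRho) p = Complex.I/2 * (((‖p.2‖ ^ 2)⁻¹ : ℝ) : ℂ) * p.2 *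
      Complex.exp (-Complex.I * lc p.2) := by
  rw [wd1, (ev2 p h2).fderiv_eq, ← wd1]; exact wd1_f2b p h2

lemma wd2_wd2bar (p : ℂ × ℂ) (h2 : p.2 ≠ 0) :
    wd2 (wd2bar modelRho) p =
      (((p.1 * Complex.exp (-Complex.I * lc p.2)).re * (‖p.2‖ ^ 2)⁻¹ : ℝ) : ℂ) := by
  rw [wd2, (ev2 p h2).fderiv_eq, ← wd2]; exact wd2_f2b p h2

end WormAux


/-- The Fefferman Monge–Ampère determinant of the defining function of `D_μ` vanishes
at every boundary point with `z₁ ≠ 0` and `ρ = 0` (the Levi-flat part of `∂D_μ`). -/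
theorem feffermanMA_modelWorm_vanishes (μ : ℝ) (hμ : 0 < μ) :
    ∀ z : ℂ × ℂ, z.1 ≠ 0 → z.2 ≠ 0 → |Real.log (‖z.2‖ ^ 2)| < μ →
      modelRho z = 0 → feffermanMA modelRho z = 0 := by
  intro z h1 h2 _ hρ0
  have hre0 : (z.1 * Complex.exp (-Complex.I * WormAux.lc z.2)).re = 0 := by
    have := hρ0
    simp only [modelRho, Complex.ofReal_eq_zero, neg_eq_zero] at this
    simpa [WormAux.lc] using this
  rw [feffermanMA, Matrix.det_fin_three]
  simp only [Matrix.of_apply, Matrix.cons_val', Matrix.cons_val_zero, Matrix.cons_val_one,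
    Matrix.cons_val_two, Matrix.head_cons, Matrix.tail_cons, Matrix.empty_val',
    Matrix.cons_val_fin_one, Matrix.head_fin_const]
  rw [hρ0, WormAux.wd1bar_modelRho z h2, WormAux.wd2bar_modelRho z h2,
    WormAux.wd1_modelRho z h2, WormAux.wd2_modelRho z h2, WormAux.wd1_wd1bar z h2,
    WormAux.wd2_wd1bar z h2, WormAux.wd1_wd2bar z h2, WormAux.wd2_wd2bar z h2,
    WormAux.f1b, WormAux.f2b, hre0]
  push_cast
  ring
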